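/- Let W₃ : Fin 2 × Fin 2 × Fin 3 → ℂ be the state with W₃(0,0,0) = W₃(0,1,1) = W₃(1,1,2) = 1 and all other coefficients zero. Let ψ be any normalized state in the closure of the SLOCC cone of W₃ under SL(2,ℂ) × SL(2,ℂ) × SL(3,ℂ), and let λ₁, λ₂, λ₃ be the largest eigenvalues of the reduced density matrices ρ⁽¹⁾(ψ), ρ⁽²⁾(ψ), ρ⁽³⁾(ψ) respectively. Then λ₂ + λ₃ ≥ 1 and λ₁ + λ₃ ≥ 1. -/

import Mathlib

open scoped BigOperators

/-- The largest real eigenvalue of a (Hermitian) complex matrix. -/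
noncomputable def lmax {n : ℕ} (M : Matrix (Fin n) (Fin n) ℂ) : ℝ :=
  sSup {r : ℝ | Module.End.HasEigenvalue (Matrix.mulVecLin M) ((r : ℂ))}

/-- First reduced density matrix of a `2 × 2 × 3` state. -/
noncomputable def rdm1 (ψ : Fin 2 × Fin 2 × Fin 3 → ℂ) : Matrix (Fin 2) (Fin 2) ℂ :=
  fun k l => ∑ b : Fin 2, ∑ c : Fin 3, ψ (k, b, c) * (starRingEnd ℂ) (ψ (l, b, c))

/-- Second reduced density matrix of a `2 × 2 × 3` state. -/
noncomputable def rdm2 (ψ : Fin 2 × Fin 2 × Fin 3 → ℂ) : Matrix (Fin 2) (Fin 2) ℂ :=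
  fun k l => ∑ a : Fin 2, ∑ c : Fin 3, ψ (a, k, c) * (starRingEnd ℂ) (ψ (a, l, c))

/-- Third reduced density matrix of a `2 × 2 × 3` state. -/
noncomputable def rdm3 (ψ : Fin 2 × Fin 2 × Fin 3 → ℂ) : Matrix (Fin 3) (Fin 3) ℂ :=
  fun k l => ∑ a : Fin 2, ∑ b : Fin 2, ψ (a, b, k) * (starRingEnd ℂ) (ψ (a, b, l))

/-- The `W₃` state `|000⟩ + |011⟩ + |112⟩` of the `2 × 2 × 3` system. -/
noncomputable def W3 : Fin 2 × Fin 2 × Fin 3 → ℂ :=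
  fun j => if j = (0, 0, 0) ∨ j = (0, 1, 1) ∨ j = (1, 1, 2) then 1 else 0

/-- The tensor product action of `SL(2,ℂ) × SL(2,ℂ) × SL(3,ℂ)` on `2 × 2 × 3` states. -/
noncomputable def act223 (g₁ g₂ : Matrix.SpecialLinearGroup (Fin 2) ℂ)
    (g₃ : Matrix.SpecialLinearGroup (Fin 3) ℂ)
    (ψ : Fin 2 × Fin 2 × Fin 3 → ℂ) : Fin 2 × Fin 2 × Fin 3 → ℂ :=
  fun j => ∑ m : Fin 2 × Fin 2 × Fin 3,
    (g₁ : Matrix (Fin 2) (Fin 2) ℂ) j.1 m.1 *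
      (g₂ : Matrix (Fin 2) (Fin 2) ℂ) j.2.1 m.2.1 *
        (g₃ : Matrix (Fin 3) (Fin 3) ℂ) j.2.2 m.2.2 * ψ m

/-- The SLOCC cone of a `2 × 2 × 3` state. -/
def cone223 (ψ : Fin 2 × Fin 2 × Fin 3 → ℂ) : Set (Fin 2 × Fin 2 × Fin 3 → ℂ) :=
  {φ | ∃ (c : ℂ) (g₁ g₂ : Matrix.SpecialLinearGroup (Fin 2) ℂ)
        (g₃ : Matrix.SpecialLinearGroup (Fin 3) ℂ), φ = c • act223 g₁ g₂ g₃ ψ}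

section SpectralAux

open Matrix

variable {n : ℕ} {M : Matrix (Fin n) (Fin n) ℂ}

lemma hasEigen_iff {μ : ℂ} :
    Module.End.HasEigenvalue (Matrix.mulVecLin M) μ ↔
      ∃ x : Fin n → ℂ, x ≠ 0 ∧ M *ᵥ x = μ • x := by
  constructor
  · intro h
    obtain ⟨v, hv⟩ := h.exists_hasEigenvector
    exact ⟨v, hv.2, by simpa [Matrix.mulVecLin_apply] using hv.apply_eq_smul⟩
  · rintro ⟨x, hx0, hx⟩
    exact Module.End.hasEigenvalue_of_hasEigenvector
      ⟨Module.End.mem_eigenspace_iff.2 (by simpa [Matrix.mulVecLin_apply] using hx), hx0⟩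

lemma eig_set_eq (hM : M.IsHermitian) :
    {r : ℝ | Module.End.HasEigenvalue (Matrix.mulVecLin M) ((r : ℂ))} =
      Set.range hM.eigenvalues := by
  classical
  ext r
  simp only [Set.mem_setOf_eq, Set.mem_range]
  constructor
  · intro h
    obtain ⟨x, hx0, hx⟩ := hasEigen_iff.1 h
    by_contra hall
    push_neg at hall
    set U : Matrix (Fin n) (Fin n) ℂ := (hM.eigenvectorUnitary : Matrix (Fin n) (Fin n) ℂ) with hU
    set D : Matrix (Fin n) (Fin n) ℂ :=
      Matrix.diagonal (RCLike.ofReal ∘ hM.eigenvalues) with hD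
    have hUU : U * star U = 1 := (Matrix.mem_unitaryGroup_iff).mp hM.eigenvectorUnitary.2
    have hspec : M = U * D * star U := hM.spectral_theorem
    have h1 : ((r : ℂ) • (1 : Matrix (Fin n) (Fin n) ℂ)) = U * ((r : ℂ) • 1) * star U := by
      rw [Matrix.mul_smul, Matrix.smul_mul, mul_one, hUU]
    have hdecomp : M - (r : ℂ) • 1 = U * (D - (r : ℂ) • 1) * star U := by
      rw [Matrix.mul_sub, Matrix.sub_mul, ← hspec, ← h1]
    have hDdet : (D - (r : ℂ) • 1).det = ∏ i, ((hM.eigenvalues i : ℂ) - r) := by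
      rw [hD, Matrix.smul_one_eq_diagonal, Matrix.diagonal_sub, Matrix.det_diagonal]
      rfl
    have hdetU : U.det * (star U).det = 1 := by
      rw [← Matrix.det_mul, hUU, Matrix.det_one]
    have hdet : (M - (r : ℂ) • 1).det ≠ 0 := by
      rw [hdecomp, Matrix.det_mul, Matrix.det_mul, hDdet]
      intro hcon
      rcases mul_eq_zero.mp hcon with hcon1 | hcon2
      · rcases mul_eq_zero.mp hcon1 with hc | hc
        · exact left_ne_zero_of_mul_eq_one hdetU hc
        · obtain ⟨i, hi⟩ := Finset.prod_eq_zero_iff.mp hc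
          exact hall i (by exact_mod_cast sub_eq_zero.mp hi.2)
      · exact right_ne_zero_of_mul_eq_one hdetU hcon2
    have hx' : (M - (r : ℂ) • 1) *ᵥ x = 0 := by
      rw [Matrix.sub_mulVec, Matrix.smul_mulVec, Matrix.one_mulVec, hx, sub_self]
    apply hx0
    have hinv : (M - (r : ℂ) • 1)⁻¹ *ᵥ ((M - (r : ℂ) • 1) *ᵥ x) = x := by
      rw [Matrix.mulVec_mulVec, Matrix.nonsing_inv_mul _ (isUnit_iff_ne_zero.mpr hdet),
        Matrix.one_mulVec]
    rw [hx', Matrix.mulVec_zero] at hinv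
    exact hinv.symm
  · rintro ⟨i, rfl⟩
    refine hasEigen_iff.2 ⟨⇑(hM.eigenvectorBasis i), ?_, ?_⟩
    · intro hcon
      exact hM.eigenvectorBasis.orthonormal.ne_zero i (by
        apply PiLp.ext; intro j; exact congrFun hcon j)
    · rw [hM.mulVec_eigenvectorBasis]
      funext j
      simp [Complex.real_smul]

lemma lmax_mem_and_ub [NeZero n] (hM : M.IsHermitian) :
    (∃ i, hM.eigenvalues i = lmax M) ∧ ∀ i, hM.eigenvalues i ≤ lmax M := by
  have hset : {r : ℝ | Module.End.HasEigenvalue (Matrix.mulVecLin M) ((r : ℂ))} =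
      Set.range hM.eigenvalues := eig_set_eq hM
  have hfin : (Set.range hM.eigenvalues).Finite := Set.finite_range _
  have hne : (Set.range hM.eigenvalues).Nonempty := Set.range_nonempty _
  constructor
  · have := hne.csSup_mem hfin
    rw [lmax, hset]
    exact this
  · intro i
    rw [lmax, hset]
    exact le_csSup hfin.bddAbove ⟨i, rfl⟩

lemma quadform_repr (hM : M.IsHermitian) (x : Fin n → ℂ) :
    ∃ y : Fin n → ℂ, (∑ i, ‖y i‖ ^ 2 = ∑ i, ‖x i‖ ^ 2) ∧
      (dotProduct (star x) (M *ᵥ x)).re =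
        ∑ i, hM.eigenvalues i * ‖y i‖ ^ 2 := by
  classical
  set U : Matrix (Fin n) (Fin n) ℂ := (hM.eigenvectorUnitary : Matrix (Fin n) (Fin n) ℂ) with hU
  set D : Matrix (Fin n) (Fin n) ℂ :=
    Matrix.diagonal (RCLike.ofReal ∘ hM.eigenvalues) with hD
  have hUU : U * star U = 1 := (Matrix.mem_unitaryGroup_iff).mp hM.eigenvectorUnitary.2
  have hspec : M = U * D * star U := hM.spectral_theorem
  set y : Fin n → ℂ := (star U) *ᵥ x with hy
  have hstarU : (star U)ᴴ = U := by
    rw [← Matrix.star_eq_conjTranspose, star_star]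
  have hstar : star y = Matrix.vecMul (star x) U := by
    rw [hy, Matrix.star_mulVec, hstarU]
  have hterm : ∀ (z : ℂ) (t : ℝ), ((starRingEnd ℂ) z * ((t : ℂ) * z)).re
      = t * ‖z‖ ^ 2 := by
    intro z t
    have : (starRingEnd ℂ) z * ((t : ℂ) * z) = (t : ℂ) * ((Complex.normSq z : ℝ) : ℂ) := by
      rw [mul_left_comm, mul_comm ((starRingEnd ℂ) z) z, Complex.mul_conj]
    rw [this, ← Complex.ofReal_mul, Complex.ofReal_re, Complex.normSq_eq_norm_sq]
  refine ⟨y, ?_, ?_⟩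
  · have h2 : dotProduct (star y) y = dotProduct (star x) x := by
      rw [hstar, ← Matrix.dotProduct_mulVec, Matrix.mulVec_mulVec, hUU, Matrix.one_mulVec]
    have hre : ∀ z : Fin n → ℂ,
        (dotProduct (star z) z).re = ∑ i, ‖z i‖ ^ 2 := by
      intro z
      rw [dotProduct, Complex.re_sum]
      refine Finset.sum_congr rfl fun i _ => ?_
      have := hterm (z i) 1
      simpa using this
    rw [← hre x, ← hre y, h2]
  · have h1 : dotProduct (star x) (M *ᵥ x) =
        dotProduct (star y) (D *ᵥ y) := by
      conv_lhs => rw [hspec]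
      rw [← Matrix.mulVec_mulVec, ← Matrix.mulVec_mulVec, ← hy,
        Matrix.dotProduct_mulVec, ← hstar]
    rw [h1, dotProduct, Complex.re_sum]
    refine Finset.sum_congr rfl fun i _ => ?_
    rw [hD, Matrix.mulVec_diagonal]
    exact hterm (y i) (hM.eigenvalues i)

end SpectralAux

section Derived

open Matrix

variable {n : ℕ} {M : Matrix (Fin n) (Fin n) ℂ}

lemma re_quadform_le_lmax [NeZero n] (hM : M.IsHermitian) {x : Fin n → ℂ}
    (hx : ∑ i, ‖x i‖ ^ 2 = 1) :
    (dotProduct (star x) (M *ᵥ x)).re ≤ lmax M := by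
  obtain ⟨y, hy1, hy2⟩ := quadform_repr hM x
  rw [hy2]
  have hub := (lmax_mem_and_ub hM).2
  calc ∑ i, hM.eigenvalues i * ‖y i‖ ^ 2
      ≤ ∑ i, lmax M * ‖y i‖ ^ 2 :=
        Finset.sum_le_sum fun i _ => mul_le_mul_of_nonneg_right (hub i) (by positivity)
    _ = lmax M := by rw [← Finset.mul_sum, hy1, hx, mul_one]

lemma trace_re_eq_sum (hM : M.IsHermitian) :
    (Matrix.trace M).re = ∑ i, hM.eigenvalues i := by
  classical
  set U : Matrix (Fin n) (Fin n) ℂ := (hM.eigenvectorUnitary : Matrix (Fin n) (Fin n) ℂ) with hU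
  set D : Matrix (Fin n) (Fin n) ℂ :=
    Matrix.diagonal (RCLike.ofReal ∘ hM.eigenvalues) with hD
  have hU'U : star U * U = 1 := (Matrix.mem_unitaryGroup_iff').mp hM.eigenvectorUnitary.2
  have h : Matrix.trace M = Matrix.trace D := by
    conv_lhs => rw [show M = U * D * star U from hM.spectral_theorem]
    rw [Matrix.trace_mul_cycle, hU'U, one_mul]
  rw [h, Matrix.trace, Complex.re_sum]
  refine Finset.sum_congr rfl fun i _ => ?_
  simp [hD, Matrix.diag]

lemma lmax_ge_one_sub_quadform {M : Matrix (Fin 2) (Fin 2) ℂ} (hM : M.IsHermitian)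
    (htr : (Matrix.trace M).re = 1) {x : Fin 2 → ℂ}
    (hx : ∑ i, ‖x i‖ ^ 2 = 1) :
    1 - (dotProduct (star x) (M *ᵥ x)).re ≤ lmax M := by
  obtain ⟨y, hy1, hy2⟩ := quadform_repr hM x
  have htr2 : hM.eigenvalues 0 + hM.eigenvalues 1 = 1 := by
    have h := trace_re_eq_sum hM
    rw [Fin.sum_univ_two] at h
    linarith [htr ▸ h]
  have hub := (lmax_mem_and_ub hM).2
  have hmin : ∀ i, 1 - lmax M ≤ hM.eigenvalues i := by
    intro i; fin_cases i
    · have := hub 1; show 1 - lmax M ≤ hM.eigenvalues 0; linarith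
    · have := hub 0; show 1 - lmax M ≤ hM.eigenvalues 1; linarith
  have h4 : ∑ i, (1 - lmax M) * ‖y i‖ ^ 2
      ≤ ∑ i, hM.eigenvalues i * ‖y i‖ ^ 2 :=
    Finset.sum_le_sum fun i _ => mul_le_mul_of_nonneg_right (hmin i) (by positivity)
  have h5 : ∑ i, (1 - lmax M) * ‖y i‖ ^ 2 = 1 - lmax M := by
    rw [← Finset.mul_sum, hy1, hx, mul_one]
  rw [hy2]
  linarith

end Derived



section Usage

open Matrix

lemma habs_c (z : ℂ) : ((‖z‖ ^ 2 : ℝ) : ℂ) = z * (starRingEnd ℂ) z := by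
  rw [← Complex.normSq_eq_norm_sq, Complex.mul_conj]

lemma rdm2_herm (ψ : Fin 2 × Fin 2 × Fin 3 → ℂ) : (rdm2 ψ).IsHermitian := by
  ext k l
  simp only [Matrix.conjTranspose_apply, rdm2, RCLike.star_def, map_sum, _root_.map_mul,
    Complex.conj_conj]
  refine Finset.sum_congr rfl fun a _ => Finset.sum_congr rfl fun c _ => ?_
  ring

lemma rdm3_herm (ψ : Fin 2 × Fin 2 × Fin 3 → ℂ) : (rdm3 ψ).IsHermitian := by
  ext k l
  simp only [Matrix.conjTranspose_apply, rdm3, RCLike.star_def, map_sum, _root_.map_mul,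
    Complex.conj_conj]
  refine Finset.sum_congr rfl fun a _ => Finset.sum_congr rfl fun b _ => ?_
  ring

lemma re_dot_rdm2 (ψ : Fin 2 × Fin 2 × Fin 3 → ℂ) (x : Fin 2 → ℂ) :
    (dotProduct (star x) (rdm2 ψ *ᵥ x)).re
      = ∑ a : Fin 2, ∑ c : Fin 3,
          ‖∑ b : Fin 2, (starRingEnd ℂ) (x b) * ψ (a, b, c)‖ ^ 2 := by
  have h : dotProduct (star x) (rdm2 ψ *ᵥ x)
      = ∑ a : Fin 2, ∑ c : Fin 3,
          (∑ b : Fin 2, (starRingEnd ℂ) (x b) * ψ (a, b, c)) *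
            (starRingEnd ℂ) (∑ b : Fin 2, (starRingEnd ℂ) (x b) * ψ (a, b, c)) := by
    simp only [dotProduct, Matrix.mulVec, rdm2, Pi.star_apply, RCLike.star_def,
      map_sum, _root_.map_mul, map_add, Complex.conj_conj, Fin.sum_univ_two, Fin.sum_univ_three]
    ring
  rw [h, Complex.re_sum]
  refine Finset.sum_congr rfl fun a _ => ?_
  rw [Complex.re_sum]
  refine Finset.sum_congr rfl fun c _ => ?_
  rw [Complex.mul_conj, Complex.normSq_eq_norm_sq, Complex.ofReal_re]

lemma re_dot_rdm3 (ψ : Fin 2 × Fin 2 × Fin 3 → ℂ) (x : Fin 3 → ℂ) :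
    (dotProduct (star x) (rdm3 ψ *ᵥ x)).re
      = ∑ a : Fin 2, ∑ b : Fin 2,
          ‖∑ c : Fin 3, (starRingEnd ℂ) (x c) * ψ (a, b, c)‖ ^ 2 := by
  have h : dotProduct (star x) (rdm3 ψ *ᵥ x)
      = ∑ a : Fin 2, ∑ b : Fin 2,
          (∑ c : Fin 3, (starRingEnd ℂ) (x c) * ψ (a, b, c)) *
            (starRingEnd ℂ) (∑ c : Fin 3, (starRingEnd ℂ) (x c) * ψ (a, b, c)) := by
    simp only [dotProduct, Matrix.mulVec, rdm3, Pi.star_apply, RCLike.star_def,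
      map_sum, _root_.map_mul, map_add, Complex.conj_conj, Fin.sum_univ_two, Fin.sum_univ_three]
    ring
  rw [h, Complex.re_sum]
  refine Finset.sum_congr rfl fun a _ => ?_
  rw [Complex.re_sum]
  refine Finset.sum_congr rfl fun b _ => ?_
  rw [Complex.mul_conj, Complex.normSq_eq_norm_sq, Complex.ofReal_re]

lemma trace_rdm2_re (ψ : Fin 2 × Fin 2 × Fin 3 → ℂ)
    (hnorm : ∑ j : Fin 2 × Fin 2 × Fin 3, ‖ψ j‖ ^ 2 = 1) :
    (Matrix.trace (rdm2 ψ)).re = 1 := by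
  have h : Matrix.trace (rdm2 ψ)
      = ((∑ j : Fin 2 × Fin 2 × Fin 3, ‖ψ j‖ ^ 2 : ℝ) : ℂ) := by
    have habs2 : ∀ z : ℂ, ((‖z‖ : ℂ)) ^ 2 = z * (starRingEnd ℂ) z := by
      intro z; rw [← Complex.ofReal_pow, habs_c]
    push_cast
    simp only [habs2, Matrix.trace, Matrix.diag, rdm2, Fintype.sum_prod_type,
      Fin.sum_univ_two, Fin.sum_univ_three]
    ring
  rw [h, hnorm, Complex.ofReal_re]

lemma cs2 (v0 v1 g0 g1 : ℂ) :
    ‖v0 * g0 + v1 * g1‖ ^ 2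
      ≤ (‖v0‖ ^ 2 + ‖v1‖ ^ 2) * (‖g0‖ ^ 2 + ‖g1‖ ^ 2) := by
  have h1 : ‖v0 * g0 + v1 * g1‖
      ≤ ‖v0‖ * ‖g0‖ + ‖v1‖ * ‖g1‖ := by
    calc ‖v0 * g0 + v1 * g1‖ ≤ ‖v0 * g0‖ + ‖v1 * g1‖ :=
          norm_add_le _ _
      _ = _ := by rw [norm_mul, norm_mul]
  have h2 : (0 : ℝ) ≤ ‖v0 * g0 + v1 * g1‖ := norm_nonneg _
  nlinarith [sq_nonneg (‖v0‖ * ‖g1‖ - ‖v1‖ * ‖g0‖),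
    norm_nonneg v0, norm_nonneg v1, norm_nonneg g0, norm_nonneg g1]

set_option maxHeartbeats 2000000 in
lemma key_ineq (ψ : Fin 2 × Fin 2 × Fin 3 → ℂ)
    (hnorm : ∑ j : Fin 2 × Fin 2 × Fin 3, ‖ψ j‖ ^ 2 = 1)
    (u v : Fin 2 → ℂ)
    (hu : ∑ a : Fin 2, ‖u a‖ ^ 2 = 1)
    (hv : ∑ b : Fin 2, ‖v b‖ ^ 2 = 1)
    (hc : ∀ c : Fin 3, ∑ a : Fin 2, ∑ b : Fin 2, u a * v b * ψ (a, b, c) = 0) :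
    1 ≤ lmax (rdm2 ψ) + lmax (rdm3 ψ) := by
  classical
  have habs2 : ∀ z : ℂ, ((‖z‖ : ℂ)) ^ 2 = z * (starRingEnd ℂ) z := fun z => by
    rw [← Complex.ofReal_pow, habs_c]
  set φ : Fin 2 → Fin 3 → ℂ := fun a c => ∑ b : Fin 2, v b * ψ (a, b, c) with hφdef
  have hu2 : ‖u 0‖ ^ 2 + ‖u 1‖ ^ 2 = 1 := by
    rw [← Fin.sum_univ_two (fun a => ‖u a‖ ^ 2)]; exact hu
  have hv2 : ‖v 0‖ ^ 2 + ‖v 1‖ ^ 2 = 1 := by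
    rw [← Fin.sum_univ_two (fun b => ‖v b‖ ^ 2)]; exact hv
  have hu' : u 0 * (starRingEnd ℂ) (u 0) + u 1 * (starRingEnd ℂ) (u 1) = 1 := by
    have h := congrArg (fun t : ℝ => (t : ℂ)) hu2
    push_cast at h
    rw [habs2, habs2] at h
    exact h
  have hφeq : ∀ c, u 0 * φ 0 c + u 1 * φ 1 c = 0 := by
    intro c
    have h := hc c
    simp only [Fin.sum_univ_two] at h
    simp only [hφdef, Fin.sum_univ_two]
    linear_combination h
  set α : Fin 3 → ℂ := fun c => (starRingEnd ℂ) (u 1) * φ 0 c - (starRingEnd ℂ) (u 0) * φ 1 c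
    with hαdef
  have hphi0 : ∀ c, φ 0 c = α c * u 1 := by
    intro c
    simp only [hαdef]
    linear_combination (-(φ 0 c)) * hu' + (starRingEnd ℂ) (u 0) * hφeq c
  have hphi1 : ∀ c, φ 1 c = α c * (-(u 0)) := by
    intro c
    simp only [hαdef]
    linear_combination (-(φ 1 c)) * hu' + (starRingEnd ℂ) (u 1) * hφeq c
  set A : ℝ := ∑ c : Fin 3, ‖α c‖ ^ 2 with hAdef
  have hA0 : (0 : ℝ) ≤ A := by
    rw [hAdef]; positivity
  have hstep1 : 1 - A ≤ lmax (rdm2 ψ) := by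
    have hx : ∑ i : Fin 2, ‖(star v) i‖ ^ 2 = 1 := by
      simpa [Pi.star_apply, RCLike.star_def, Complex.norm_conj] using hv
    have h := lmax_ge_one_sub_quadform (rdm2_herm ψ) (trace_rdm2_re ψ hnorm) hx
    rw [re_dot_rdm2] at h
    have hsum : ∑ a : Fin 2, ∑ c : Fin 3,
        ‖∑ b : Fin 2, (starRingEnd ℂ) ((star v) b) * ψ (a, b, c)‖ ^ 2 = A := by
      have hsimp : ∀ (a : Fin 2) (c : Fin 3),
          (∑ b : Fin 2, (starRingEnd ℂ) ((star v) b) * ψ (a, b, c)) = φ a c := by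
        intro a c
        simp only [hφdef, Pi.star_apply, RCLike.star_def, Complex.conj_conj]
      have h0 : ∀ c : Fin 3, ‖φ 0 c‖ ^ 2 = ‖α c‖ ^ 2
          * ‖u 1‖ ^ 2 := by
        intro c; rw [hphi0 c, norm_mul]; ring
      have h1 : ∀ c : Fin 3, ‖φ 1 c‖ ^ 2 = ‖α c‖ ^ 2
          * ‖u 0‖ ^ 2 := by
        intro c; rw [hphi1 c, norm_mul]; rw [norm_neg]; ring
      calc ∑ a : Fin 2, ∑ c : Fin 3,
          ‖∑ b : Fin 2, (starRingEnd ℂ) ((star v) b) * ψ (a, b, c)‖ ^ 2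
          = ∑ a : Fin 2, ∑ c : Fin 3, ‖φ a c‖ ^ 2 := by
            refine Finset.sum_congr rfl fun a _ => Finset.sum_congr rfl fun c _ => ?_
            rw [hsimp a c]
        _ = ∑ c : Fin 3, ‖φ 0 c‖ ^ 2 + ∑ c : Fin 3, ‖φ 1 c‖ ^ 2 := by
            rw [Fin.sum_univ_two (fun a => ∑ c : Fin 3, ‖φ a c‖ ^ 2)]
        _ = ∑ c : Fin 3, ‖α c‖ ^ 2 * (‖u 0‖ ^ 2
              + ‖u 1‖ ^ 2) := by
            rw [← Finset.sum_add_distrib]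
            refine Finset.sum_congr rfl fun c _ => ?_
            rw [h0 c, h1 c]; ring
        _ = A := by
            rw [hAdef]
            refine Finset.sum_congr rfl fun c _ => ?_
            rw [hu2, mul_one]
    rw [hsum] at h
    exact h
  have hstep2 : A ≤ lmax (rdm3 ψ) := by
    rcases eq_or_lt_of_le hA0 with hA | hA
    · have hx : ∑ i : Fin 3, ‖(![1, 0, 0] : Fin 3 → ℂ) i‖ ^ 2 = 1 := by
        simp [Fin.sum_univ_three]
      have h := re_quadform_le_lmax (rdm3_herm ψ) hx
      rw [re_dot_rdm3] at h
      refine le_trans (le_of_eq hA.symm) (le_trans ?_ h)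
      refine Finset.sum_nonneg fun a _ => Finset.sum_nonneg fun b _ => sq_nonneg _
    · set r : ℝ := Real.sqrt A with hrdef
      have hr2 : r ^ 2 = A := Real.sq_sqrt hA0
      have hrpos : 0 < r := Real.sqrt_pos.mpr hA
      have hrne : (r : ℂ) ≠ 0 := by
        simp only [ne_eq, Complex.ofReal_eq_zero]
        exact ne_of_gt hrpos
      set x : Fin 3 → ℂ := fun c => ((r : ℝ) : ℂ)⁻¹ * α c with hxdef
      have hxabs : ∀ c, ‖x c‖ ^ 2 = r⁻¹ ^ 2 * ‖α c‖ ^ 2 := by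
        intro c
        rw [hxdef]
        simp only [norm_mul, norm_inv, Complex.norm_real, Real.norm_eq_abs, abs_of_pos hrpos]
        ring
      have hx : ∑ i : Fin 3, ‖x i‖ ^ 2 = 1 := by
        have : ∑ i : Fin 3, ‖x i‖ ^ 2
            = r⁻¹ ^ 2 * ∑ c : Fin 3, ‖α c‖ ^ 2 := by
          rw [Finset.mul_sum]
          exact Finset.sum_congr rfl fun c _ => hxabs c
        rw [this, ← hAdef, ← hr2]
        field_simp
      have h := re_quadform_le_lmax (rdm3_herm ψ) hx
      rw [re_dot_rdm3] at h
      set T : Fin 2 → Fin 2 → ℂ := fun a b => ∑ c : Fin 3, (starRingEnd ℂ) (x c) * ψ (a, b, c)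
        with hTdef
      have hAc : (∑ c : Fin 3, (starRingEnd ℂ) (α c) * α c) = ((A : ℝ) : ℂ) := by
        rw [hAdef, Complex.ofReal_sum]
        refine Finset.sum_congr rfl fun c _ => ?_
        rw [habs_c]; ring
      have hrow : ∀ a : Fin 2, (v 0 * T a 0 + v 1 * T a 1)
          = ∑ c : Fin 3, (starRingEnd ℂ) (x c) * φ a c := by
        intro a
        simp only [hTdef, hφdef, Fin.sum_univ_two, Fin.sum_univ_three]
        ring
      have hconjx : ∀ c, (starRingEnd ℂ) (x c) = ((r : ℝ) : ℂ)⁻¹ * (starRingEnd ℂ) (α c) := by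
        intro c
        rw [hxdef]
        simp only [_root_.map_mul, map_inv₀, Complex.conj_ofReal]
      have hval0 : (∑ c : Fin 3, (starRingEnd ℂ) (x c) * φ 0 c) = ((r : ℝ) : ℂ) * u 1 := by
        have : ∀ c : Fin 3, (starRingEnd ℂ) (x c) * φ 0 c
            = ((starRingEnd ℂ) (α c) * α c) * (((r : ℝ) : ℂ)⁻¹ * u 1) := by
          intro c; rw [hconjx c, hphi0 c]; ring
        rw [Finset.sum_congr rfl fun c _ => this c, ← Finset.sum_mul, hAc, ← hr2]
        push_cast
        field_simp
      have hval1 : (∑ c : Fin 3, (starRingEnd ℂ) (x c) * φ 1 c) = ((r : ℝ) : ℂ) * (-(u 0)) := by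
        have : ∀ c : Fin 3, (starRingEnd ℂ) (x c) * φ 1 c
            = ((starRingEnd ℂ) (α c) * α c) * (((r : ℝ) : ℂ)⁻¹ * (-(u 0))) := by
          intro c; rw [hconjx c, hphi1 c]; ring
        rw [Finset.sum_congr rfl fun c _ => this c, ← Finset.sum_mul, hAc, ← hr2]
        push_cast
        field_simp
      have hcs0 : ‖v 0 * T 0 0 + v 1 * T 0 1‖ ^ 2
          ≤ ‖T 0 0‖ ^ 2 + ‖T 0 1‖ ^ 2 := by
        have := cs2 (v 0) (v 1) (T 0 0) (T 0 1)
        rw [hv2, one_mul] at this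
        exact this
      have hcs1 : ‖v 0 * T 1 0 + v 1 * T 1 1‖ ^ 2
          ≤ ‖T 1 0‖ ^ 2 + ‖T 1 1‖ ^ 2 := by
        have := cs2 (v 0) (v 1) (T 1 0) (T 1 1)
        rw [hv2, one_mul] at this
        exact this
      have habs0 : ‖v 0 * T 0 0 + v 1 * T 0 1‖ ^ 2 = A * ‖u 1‖ ^ 2 := by
        rw [hrow 0, hval0, norm_mul, Complex.norm_real, Real.norm_eq_abs, abs_of_pos hrpos]
        rw [mul_pow, hr2]
      have habs1 : ‖v 0 * T 1 0 + v 1 * T 1 1‖ ^ 2 = A * ‖u 0‖ ^ 2 := by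
        rw [hrow 1, hval1, norm_mul, Complex.norm_real, Real.norm_eq_abs, abs_of_pos hrpos]
        rw [norm_neg, mul_pow, hr2]
      have hsum : ∑ a : Fin 2, ∑ b : Fin 2, ‖T a b‖ ^ 2
          = (‖T 0 0‖ ^ 2 + ‖T 0 1‖ ^ 2)
            + (‖T 1 0‖ ^ 2 + ‖T 1 1‖ ^ 2) := by
        simp [Fin.sum_univ_two]
      have hfin : A ≤ ∑ a : Fin 2, ∑ b : Fin 2, ‖T a b‖ ^ 2 := by
        rw [hsum]
        nlinarith [hcs0, hcs1, habs0, habs1, hu2]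
      calc A ≤ ∑ a : Fin 2, ∑ b : Fin 2, ‖T a b‖ ^ 2 := hfin
        _ ≤ lmax (rdm3 ψ) := h
  linarith

end Usage

section Cone

open Matrix

/-- The closed set of states annihilated by some unit product tensor on the
first two factors. -/
def degSet : Set (Fin 2 × Fin 2 × Fin 3 → ℂ) :=
  {ψ | ∃ u v : Fin 2 → ℂ, (∑ a : Fin 2, ‖u a‖ ^ 2 = 1) ∧
    (∑ b : Fin 2, ‖v b‖ ^ 2 = 1) ∧
    ∀ c : Fin 3, ∑ a : Fin 2, ∑ b : Fin 2, u a * v b * ψ (a, b, c) = 0}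

set_option maxHeartbeats 1000000 in
lemma cone_subset_degSet : cone223 W3 ⊆ degSet := by
  rintro φ ⟨c, g1, g2, g3, rfl⟩
  set G1 : Matrix (Fin 2) (Fin 2) ℂ := (g1 : Matrix (Fin 2) (Fin 2) ℂ) with hG1def
  set G2 : Matrix (Fin 2) (Fin 2) ℂ := (g2 : Matrix (Fin 2) (Fin 2) ℂ) with hG2def
  set G3 : Matrix (Fin 3) (Fin 3) ℂ := (g3 : Matrix (Fin 3) (Fin 3) ℂ) with hG3def
  set u0 : Fin 2 → ℂ :=
    fun a => ((g1⁻¹ : Matrix.SpecialLinearGroup (Fin 2) ℂ) : Matrix (Fin 2) (Fin 2) ℂ) 1 a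
    with hu0def
  set v0 : Fin 2 → ℂ :=
    fun b => ((g2⁻¹ : Matrix.SpecialLinearGroup (Fin 2) ℂ) : Matrix (Fin 2) (Fin 2) ℂ) 0 b
    with hv0def
  have hG1 : ((g1⁻¹ : Matrix.SpecialLinearGroup (Fin 2) ℂ) : Matrix (Fin 2) (Fin 2) ℂ) * G1
      = 1 := by
    rw [hG1def, ← Matrix.SpecialLinearGroup.coe_mul, inv_mul_cancel,
      Matrix.SpecialLinearGroup.coe_one]
  have hG2 : ((g2⁻¹ : Matrix.SpecialLinearGroup (Fin 2) ℂ) : Matrix (Fin 2) (Fin 2) ℂ) * G2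
      = 1 := by
    rw [hG2def, ← Matrix.SpecialLinearGroup.coe_mul, inv_mul_cancel,
      Matrix.SpecialLinearGroup.coe_one]
  have e1 : u0 0 * G1 0 0 + u0 1 * G1 1 0 = 0 := by
    have h := congrFun (congrFun hG1 1) 0
    simpa [Matrix.mul_apply, Fin.sum_univ_two, Matrix.one_apply, hu0def] using h
  have e2 : u0 0 * G1 0 1 + u0 1 * G1 1 1 = 1 := by
    have h := congrFun (congrFun hG1 1) 1
    simpa [Matrix.mul_apply, Fin.sum_univ_two, Matrix.one_apply, hu0def] using h
  have f1 : v0 0 * G2 0 1 + v0 1 * G2 1 1 = 0 := by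
    have h := congrFun (congrFun hG2 0) 1
    simpa [Matrix.mul_apply, Fin.sum_univ_two, Matrix.one_apply, hv0def] using h
  have f2 : v0 0 * G2 0 0 + v0 1 * G2 1 0 = 1 := by
    have h := congrFun (congrFun hG2 0) 0
    simpa [Matrix.mul_apply, Fin.sum_univ_two, Matrix.one_apply, hv0def] using h
  have hSu : 0 < ∑ a : Fin 2, ‖u0 a‖ ^ 2 := by
    rcases (Finset.sum_nonneg fun a _ => sq_nonneg (‖u0 a‖)).lt_or_eq with h | h
    · exact h
    · exfalso
      have hz : ∀ a ∈ Finset.univ, ‖u0 a‖ ^ 2 = 0 :=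
        (Finset.sum_eq_zero_iff_of_nonneg fun a _ => sq_nonneg _).mp h.symm
      have h0 : u0 0 = 0 := by
        have := hz 0 (Finset.mem_univ _)
        simpa using this
      have h1 : u0 1 = 0 := by
        have := hz 1 (Finset.mem_univ _)
        simpa using this
      rw [h0, h1, zero_mul, zero_mul, add_zero] at e2
      exact zero_ne_one e2
  have hSv : 0 < ∑ b : Fin 2, ‖v0 b‖ ^ 2 := by
    rcases (Finset.sum_nonneg fun b _ => sq_nonneg (‖v0 b‖)).lt_or_eq with h | h
    · exact h
    · exfalso
      have hz : ∀ b ∈ Finset.univ, ‖v0 b‖ ^ 2 = 0 :=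
        (Finset.sum_eq_zero_iff_of_nonneg fun b _ => sq_nonneg _).mp h.symm
      have h0 : v0 0 = 0 := by
        have := hz 0 (Finset.mem_univ _)
        simpa using this
      have h1 : v0 1 = 0 := by
        have := hz 1 (Finset.mem_univ _)
        simpa using this
      rw [h0, h1, zero_mul, zero_mul, add_zero] at f2
      exact zero_ne_one f2
  set nu : ℝ := Real.sqrt (∑ a : Fin 2, ‖u0 a‖ ^ 2) with hnudef
  set nv : ℝ := Real.sqrt (∑ b : Fin 2, ‖v0 b‖ ^ 2) with hnvdef
  have hnu : 0 < nu := Real.sqrt_pos.mpr hSu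
  have hnv : 0 < nv := Real.sqrt_pos.mpr hSv
  have hnu2 : nu ^ 2 = ∑ a : Fin 2, ‖u0 a‖ ^ 2 := Real.sq_sqrt hSu.le
  have hnv2 : nv ^ 2 = ∑ b : Fin 2, ‖v0 b‖ ^ 2 := Real.sq_sqrt hSv.le
  refine ⟨fun a => ((nu : ℝ) : ℂ)⁻¹ * u0 a, fun b => ((nv : ℝ) : ℂ)⁻¹ * v0 b, ?_, ?_, ?_⟩
  · have : ∀ a : Fin 2, ‖((nu : ℝ) : ℂ)⁻¹ * u0 a‖ ^ 2
        = nu⁻¹ ^ 2 * ‖u0 a‖ ^ 2 := by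
      intro a
      rw [norm_mul, norm_inv, Complex.norm_real, Real.norm_eq_abs, abs_of_pos hnu, mul_pow]
    rw [Finset.sum_congr rfl fun a _ => this a, ← Finset.mul_sum, ← hnu2]
    field_simp
  · have : ∀ b : Fin 2, ‖((nv : ℝ) : ℂ)⁻¹ * v0 b‖ ^ 2
        = nv⁻¹ ^ 2 * ‖v0 b‖ ^ 2 := by
      intro b
      rw [norm_mul, norm_inv, Complex.norm_real, Real.norm_eq_abs, abs_of_pos hnv, mul_pow]
    rw [Finset.sum_congr rfl fun b _ => this b, ← Finset.mul_sum, ← hnv2]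
    field_simp
  · intro c0
    have hact : ∀ a b : Fin 2, act223 g1 g2 g3 W3 (a, b, c0) =
        G1 a 0 * G2 b 0 * G3 c0 0 + G1 a 0 * G2 b 1 * G3 c0 1 + G1 a 1 * G2 b 1 * G3 c0 2 := by
      intro a b
      rw [act223]
      rw [Fintype.sum_prod_type]
      simp only [Fintype.sum_prod_type, Fin.sum_univ_two, Fin.sum_univ_three, W3,
        Prod.mk.injEq, ← hG1def, ← hG2def, ← hG3def]
      norm_num
      simp only [Fin.reduceEq, if_false, ite_false]
      ring
    simp only [Pi.smul_apply, smul_eq_mul, Fin.sum_univ_two, hact]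
    linear_combination
      (((nu : ℝ) : ℂ)⁻¹ * ((nv : ℝ) : ℂ)⁻¹ * c *
        ((v0 0 * G2 0 0 + v0 1 * G2 1 0) * G3 c0 0
          + (v0 0 * G2 0 1 + v0 1 * G2 1 1) * G3 c0 1)) * e1 +
      (((nu : ℝ) : ℂ)⁻¹ * ((nv : ℝ) : ℂ)⁻¹ * c *
        ((u0 0 * G1 0 1 + u0 1 * G1 1 1) * G3 c0 2)) * f1

lemma degSet_closed : IsClosed degSet := by
  let K : Set ((Fin 2 → ℂ) × (Fin 2 → ℂ)) :=
    {p | (∑ a : Fin 2, ‖p.1 a‖ ^ 2 = 1) ∧ (∑ b : Fin 2, ‖p.2 b‖ ^ 2 = 1)}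
  have hcont1 : Continuous fun p : (Fin 2 → ℂ) × (Fin 2 → ℂ) =>
      ∑ a : Fin 2, ‖p.1 a‖ ^ 2 := by
    refine continuous_finset_sum _ fun a _ => ?_
    exact (continuous_norm.comp ((continuous_apply a).comp continuous_fst)).pow 2
  have hcont2 : Continuous fun p : (Fin 2 → ℂ) × (Fin 2 → ℂ) =>
      ∑ b : Fin 2, ‖p.2 b‖ ^ 2 := by
    refine continuous_finset_sum _ fun b _ => ?_
    exact (continuous_norm.comp ((continuous_apply b).comp continuous_snd)).pow 2
  have hKclosed : IsClosed K :=
    IsClosed.inter (isClosed_eq hcont1 continuous_const) (isClosed_eq hcont2 continuous_const)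
  have hKcomp : IsCompact K := by
    refine (isCompact_closedBall (0 : (Fin 2 → ℂ) × (Fin 2 → ℂ)) 1).of_isClosed_subset
      hKclosed ?_
    intro p hp
    rw [Metric.mem_closedBall, dist_zero_right]
    have key : ∀ w : Fin 2 → ℂ, (∑ a : Fin 2, ‖w a‖ ^ 2 = 1) → ‖w‖ ≤ 1 := by
      intro w hw
      rw [pi_norm_le_iff_of_nonneg zero_le_one]
      intro a
      have h1 : ‖w a‖ ^ 2 ≤ 1 := by
        rw [← hw]
        exact Finset.single_le_sum (fun b _ => sq_nonneg (‖w b‖))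
          (Finset.mem_univ a)
      have h2 : (0 : ℝ) ≤ ‖w a‖ := norm_nonneg _
      nlinarith
    exact max_le (key p.1 hp.1) (key p.2 hp.2)
  haveI : CompactSpace K := isCompact_iff_compactSpace.mp hKcomp
  let T : Set ((Fin 2 × Fin 2 × Fin 3 → ℂ) × K) :=
    {q | ∀ c : Fin 3,
      ∑ a : Fin 2, ∑ b : Fin 2, (q.2 : (Fin 2 → ℂ) × (Fin 2 → ℂ)).1 a *
        (q.2 : (Fin 2 → ℂ) × (Fin 2 → ℂ)).2 b * q.1 (a, b, c) = 0}
  have hT : IsClosed T := by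
    have hrw : T = ⋂ c : Fin 3, {q : (Fin 2 × Fin 2 × Fin 3 → ℂ) × K |
        ∑ a : Fin 2, ∑ b : Fin 2, (q.2 : (Fin 2 → ℂ) × (Fin 2 → ℂ)).1 a *
          (q.2 : (Fin 2 → ℂ) × (Fin 2 → ℂ)).2 b * q.1 (a, b, c) = 0} := by
      ext q
      simp only [T, Set.mem_setOf_eq, Set.mem_iInter]
    rw [hrw]
    refine isClosed_iInter fun c => isClosed_eq ?_ continuous_const
    refine continuous_finset_sum _ fun a _ => continuous_finset_sum _ fun b _ => ?_
    refine Continuous.mul (Continuous.mul ?_ ?_) ?_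
    · exact (continuous_apply a).comp (continuous_fst.comp
        (continuous_subtype_val.comp continuous_snd))
    · exact (continuous_apply b).comp (continuous_snd.comp
        (continuous_subtype_val.comp continuous_snd))
    · exact (continuous_apply ((a, b, c) : Fin 2 × Fin 2 × Fin 3)).comp continuous_fst
  have himg : degSet = Prod.fst '' T := by
    ext ψ
    constructor
    · rintro ⟨u, v, hu, hv, hcc⟩
      exact ⟨(ψ, ⟨(u, v), ⟨hu, hv⟩⟩), hcc, rfl⟩
    · rintro ⟨⟨ψ', k⟩, hq, rfl⟩
      exact ⟨(k : (Fin 2 → ℂ) × (Fin 2 → ℂ)).1, (k : (Fin 2 → ℂ) × (Fin 2 → ℂ)).2,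
        k.2.1, k.2.2, hq⟩
  rw [himg]
  exact isClosedMap_fst_of_compactSpace T hT

end Cone


/-- Any normalized state in the SLOCC orbit closure of `W₃` satisfies
`λ₂ + λ₃ ≥ 1` and `λ₁ + λ₃ ≥ 1` for its maximal local eigenvalues. -/
theorem W3_eigenvalue_inequalities (ψ : Fin 2 × Fin 2 × Fin 3 → ℂ)
    (hnorm : ∑ j : Fin 2 × Fin 2 × Fin 3, ‖ψ j‖ ^ 2 = 1)
    (hmem : ψ ∈ closure (cone223 W3)) :
    1 ≤ lmax (rdm2 ψ) + lmax (rdm3 ψ) ∧ 1 ≤ lmax (rdm1 ψ) + lmax (rdm3 ψ) := by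
  have hψS : ψ ∈ degSet := closure_minimal cone_subset_degSet degSet_closed hmem
  obtain ⟨u, v, hu, hv, hc⟩ := hψS
  have h1 := key_ineq ψ hnorm u v hu hv hc
  set ψ' : Fin 2 × Fin 2 × Fin 3 → ℂ := fun j => ψ (j.2.1, j.1, j.2.2) with hψ'def
  have hnorm' : ∑ j : Fin 2 × Fin 2 × Fin 3, ‖ψ' j‖ ^ 2 = 1 := by
    rw [← hnorm]
    exact Equiv.sum_comp
      (⟨fun j => (j.2.1, j.1, j.2.2), fun j => (j.2.1, j.1, j.2.2), fun j => rfl, fun j => rfl⟩ :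
        (Fin 2 × Fin 2 × Fin 3) ≃ (Fin 2 × Fin 2 × Fin 3))
      (fun j => ‖ψ j‖ ^ 2)
  have hc' : ∀ c : Fin 3, ∑ a : Fin 2, ∑ b : Fin 2, v a * u b * ψ' (a, b, c) = 0 := by
    intro c
    have h := hc c
    simp only [Fin.sum_univ_two] at h ⊢
    simp only [hψ'def]
    linear_combination h
  have h2 := key_ineq ψ' hnorm' v u hv hu hc'
  have hrdm2 : rdm2 ψ' = rdm1 ψ := rfl
  have hrdm3 : rdm3 ψ' = rdm3 ψ := by
    funext k l
    exact Finset.sum_comm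
  rw [hrdm2, hrdm3] at h2
  exact ⟨h1, h2⟩
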